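/- The maximum number of edges of an S_{2,2}-free subgraph of Q_3 is exactly 9, i.e., ex(Q_3, S_{2,2}) = 9. -/

import Mathlib

open SimpleGraph

/-- The `n`-dimensional hypercube: vertices are `{0,1}^n`, adjacent iff they
differ in exactly one coordinate (Hamming distance 1). -/
def cube (n : ℕ) : SimpleGraph (Fin n → Bool) where
  Adj x y := hammingDist x y = 1
  symm := ⟨fun x y h => by show hammingDist y x = 1; rw [hammingDist_comm]; exact h⟩
  loopless := ⟨fun x h => by simp [hammingDist_self] at h⟩

/-- The double star `S_{k,l}`: an edge `uv` (here `Sum.inl none` and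
`Sum.inr none`) with `k` leaves attached to `u` and `l` further leaves
attached to `v`. -/
def doubleStar (k l : ℕ) : SimpleGraph (Option (Fin k) ⊕ Option (Fin l)) :=
  SimpleGraph.fromRel (fun a b =>
    (a = Sum.inl none ∧ b = Sum.inr none) ∨
    (a = Sum.inl none ∧ ∃ i, b = Sum.inl (some i)) ∨
    (a = Sum.inr none ∧ ∃ j, b = Sum.inr (some j)))

/-- `G` contains `H` as a (not necessarily induced) subgraph. -/
def Contains {α β : Type*} (G : SimpleGraph α) (H : SimpleGraph β) : Prop :=
  ∃ f : β ↪ α, ∀ a b, H.Adj a b → G.Adj (f a) (f b)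

/-- The Turán number of `H` in the hypercube `Q_n`: the maximum number of
edges of an `H`-free subgraph of `Q_n`. -/
noncomputable def exQ (n : ℕ) {β : Type*} (H : SimpleGraph β) : ℕ :=
  sSup {m | ∃ G : SimpleGraph (Fin n → Bool),
    G ≤ cube n ∧ ¬ Contains G H ∧ G.edgeSet.ncard = m}

/-- Number of coordinates equal to `1` (Hamming weight). -/
def wt {n : ℕ} (x : Fin n → Bool) : ℕ := hammingDist x (fun _ => false)

/-! ### Auxiliary development -/


instance {n} : DecidableRel (cube n).Adj :=
  fun x y => inferInstanceAs (Decidable (hammingDist x y = 1))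

abbrev V3 := Fin 3 → Bool

def mkF {α : Type*} (u v a b c d : α) : Option (Fin 2) ⊕ Option (Fin 2) → α
  | .inl none => u
  | .inl (some i) => if i = 0 then a else b
  | .inr none => v
  | .inr (some j) => if j = 0 then c else d

lemma fintwo : ∀ i : Fin 2, i = 0 ∨ i = 1 := by decide

lemma mkF_inj {α : Type*} {u v a b c d : α}
    (h1 : u ≠ v) (h2 : u ≠ a) (h3 : u ≠ b) (h4 : u ≠ c) (h5 : u ≠ d)
    (h6 : v ≠ a) (h7 : v ≠ b) (h8 : v ≠ c) (h9 : v ≠ d)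
    (h10 : a ≠ b) (h11 : a ≠ c) (h12 : a ≠ d)
    (h13 : b ≠ c) (h14 : b ≠ d) (h15 : c ≠ d) :
    Function.Injective (mkF u v a b c d) := by
  rintro ((_|i)|(_|i)) ((_|j)|(_|j)) h <;>
    first
    | rfl
    | (rcases fintwo i with rfl|rfl <;> rcases fintwo j with rfl|rfl <;> simp_all [mkF])
    | (rcases fintwo i with rfl|rfl <;> simp_all [mkF])
    | (rcases fintwo j with rfl|rfl <;> simp_all [mkF])
    | simp_all [mkF]

lemma cube_tri : ∀ x y z : V3, (cube 3).Adj x y → (cube 3).Adj x z → ¬ (cube 3).Adj y z := by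
  decide

lemma cube_deg3 : ∀ u : V3, (Finset.univ.filter (fun w => (cube 3).Adj u w)).card ≤ 3 := by
  decide

lemma contains_of {G : SimpleGraph V3} [DecidableRel G.Adj] (hle : G ≤ cube 3)
    {u v : V3} (huv : G.Adj u v) (hu : 3 ≤ G.degree u) (hv : 3 ≤ G.degree v) :
    Contains G (doubleStar 2 2) := by
  have hvmem : v ∈ G.neighborFinset u := (G.mem_neighborFinset u v).mpr huv
  have humem : u ∈ G.neighborFinset v := (G.mem_neighborFinset v u).mpr huv.symm
  have hcu : 1 < ((G.neighborFinset u).erase v).card := by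
    rw [Finset.card_erase_of_mem hvmem]
    have : G.degree u = (G.neighborFinset u).card := rfl
    omega
  have hcv : 1 < ((G.neighborFinset v).erase u).card := by
    rw [Finset.card_erase_of_mem humem]
    have : G.degree v = (G.neighborFinset v).card := rfl
    omega
  obtain ⟨a, ha, b, hb, hab⟩ := Finset.one_lt_card.1 hcu
  obtain ⟨c, hc, d, hd, hcd⟩ := Finset.one_lt_card.1 hcv
  have hua : G.Adj u a := (G.mem_neighborFinset u a).mp (Finset.mem_of_mem_erase ha)
  have hub : G.Adj u b := (G.mem_neighborFinset u b).mp (Finset.mem_of_mem_erase hb)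
  have hvc : G.Adj v c := (G.mem_neighborFinset v c).mp (Finset.mem_of_mem_erase hc)
  have hvd : G.Adj v d := (G.mem_neighborFinset v d).mp (Finset.mem_of_mem_erase hd)
  have hav : a ≠ v := Finset.ne_of_mem_erase ha
  have hbv : b ≠ v := Finset.ne_of_mem_erase hb
  have hcu' : c ≠ u := Finset.ne_of_mem_erase hc
  have hdu' : d ≠ u := Finset.ne_of_mem_erase hd
  have key : ∀ x, G.Adj u x → G.Adj v x → False := fun x hx1 hx2 =>
    cube_tri x u v (hle hx1).symm (hle hx2).symm (hle huv)
  have hac : a ≠ c := fun h => key a hua (by rwa [h])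
  have had : a ≠ d := fun h => key a hua (by rwa [h])
  have hbc : b ≠ c := fun h => key b hub (by rwa [h])
  have hbd : b ≠ d := fun h => key b hub (by rwa [h])
  refine ⟨⟨mkF u v a b c d,
    mkF_inj huv.ne hua.ne hub.ne hcu'.symm hdu'.symm hav.symm hbv.symm hvc.ne hvd.ne
      hab hac had hbc hbd hcd⟩, ?_⟩
  intro p q hpq
  rw [doubleStar, SimpleGraph.fromRel_adj] at hpq
  obtain ⟨hne, h⟩ := hpq
  rcases h with (⟨rfl, rfl⟩|⟨rfl, i, rfl⟩|⟨rfl, j, rfl⟩)|(⟨rfl, rfl⟩|⟨rfl, i, rfl⟩|⟨rfl, j, rfl⟩)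
  · exact huv
  · rcases fintwo i with rfl|rfl
    · simpa [mkF] using hua
    · simpa [mkF] using hub
  · rcases fintwo j with rfl|rfl
    · simpa [mkF] using hvc
    · simpa [mkF] using hvd
  · exact huv.symm
  · rcases fintwo i with rfl|rfl
    · simpa [mkF] using hua.symm
    · simpa [mkF] using hub.symm
  · rcases fintwo j with rfl|rfl
    · simpa [mkF] using hvc.symm
    · simpa [mkF] using hvd.symm

lemma exists_deg_of_contains {G : SimpleGraph V3} [DecidableRel G.Adj]
    (h : Contains G (doubleStar 2 2)) :
    ∃ u v, G.Adj u v ∧ 3 ≤ G.degree u ∧ 3 ≤ G.degree v := by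
  classical
  obtain ⟨f, hf⟩ := h
  have a1 : (doubleStar 2 2).Adj (.inl none) (.inr none) := by
    rw [doubleStar, SimpleGraph.fromRel_adj]
    exact ⟨by simp, Or.inl (Or.inl ⟨rfl, rfl⟩)⟩
  have a2 : ∀ i : Fin 2, (doubleStar 2 2).Adj (.inl none) (.inl (some i)) := by
    intro i
    rw [doubleStar, SimpleGraph.fromRel_adj]
    exact ⟨by simp, Or.inl (Or.inr (Or.inl ⟨rfl, i, rfl⟩))⟩
  have a3 : ∀ j : Fin 2, (doubleStar 2 2).Adj (.inr none) (.inr (some j)) := by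
    intro j
    rw [doubleStar, SimpleGraph.fromRel_adj]
    exact ⟨by simp, Or.inl (Or.inr (Or.inr ⟨rfl, j, rfl⟩))⟩
  refine ⟨f (.inl none), f (.inr none), hf _ _ a1, ?_, ?_⟩
  · have hsub : ({f (.inr none), f (.inl (some 0)), f (.inl (some 1))} : Finset V3)
        ⊆ G.neighborFinset (f (.inl none)) := by
      intro x hx
      rw [SimpleGraph.mem_neighborFinset]
      simp only [Finset.mem_insert, Finset.mem_singleton] at hx
      rcases hx with rfl|rfl|rfl
      · exact hf _ _ a1
      · exact hf _ _ (a2 0)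
      · exact hf _ _ (a2 1)
    have hcard : ({f (.inr none), f (.inl (some 0)), f (.inl (some 1))} : Finset V3).card = 3 := by
      rw [Finset.card_insert_of_notMem (by simp), Finset.card_insert_of_notMem (by simp),
        Finset.card_singleton]
    calc 3 = _ := hcard.symm
      _ ≤ (G.neighborFinset (f (.inl none))).card := Finset.card_le_card hsub
  · have hsub : ({f (.inl none), f (.inr (some 0)), f (.inr (some 1))} : Finset V3)
        ⊆ G.neighborFinset (f (.inr none)) := by
      intro x hx
      rw [SimpleGraph.mem_neighborFinset]
      simp only [Finset.mem_insert, Finset.mem_singleton] at hx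
      rcases hx with rfl|rfl|rfl
      · exact (hf _ _ a1).symm
      · exact hf _ _ (a3 0)
      · exact hf _ _ (a3 1)
    have hcard : ({f (.inl none), f (.inr (some 0)), f (.inr (some 1))} : Finset V3).card = 3 := by
      rw [Finset.card_insert_of_notMem (by simp), Finset.card_insert_of_notMem (by simp),
        Finset.card_singleton]
    calc 3 = _ := hcard.symm
      _ ≤ (G.neighborFinset (f (.inr none))).card := Finset.card_le_card hsub

lemma upper {G : SimpleGraph V3} [DecidableEq V3] [DecidableRel G.Adj]
    (hle : G ≤ cube 3) (hnc : ¬ Contains G (doubleStar 2 2)) :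
    G.edgeFinset.card ≤ 9 := by
  by_contra hlt
  push_neg at hlt
  have hdeg3 : ∀ u, G.degree u ≤ 3 := by
    intro u
    have hsub : G.neighborFinset u ⊆ Finset.univ.filter (fun w => (cube 3).Adj u w) := by
      intro w hw
      simp only [Finset.mem_filter, Finset.mem_univ, true_and]
      exact hle ((G.mem_neighborFinset u w).mp hw)
    exact (Finset.card_le_card hsub).trans (cube_deg3 u)
  have hedge : ∀ u v, G.Adj u v → G.degree u ≤ 2 ∨ G.degree v ≤ 2 := by
    intro u v huv
    by_contra hcon
    push_neg at hcon
    exact hnc (contains_of hle huv (by omega) (by omega))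
  set B := Finset.univ.filter (fun u => G.degree u ≤ 2) with hB
  have hsum : ∑ v, G.degree v = 2 * G.edgeFinset.card :=
    SimpleGraph.sum_degrees_eq_twice_card_edges G
  have hBsum : (∑ v, G.degree v) + B.card ≤ 24 := by
    have hpt : ∀ v ∈ (Finset.univ : Finset V3),
        G.degree v + (if G.degree v ≤ 2 then 1 else 0) ≤ 3 := by
      intro v _
      have := hdeg3 v
      split <;> omega
    calc (∑ v, G.degree v) + B.card
        = ∑ v, (G.degree v + if G.degree v ≤ 2 then 1 else 0) := by
          rw [Finset.sum_add_distrib, hB, Finset.card_filter]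
      _ ≤ ∑ _v : V3, 3 := Finset.sum_le_sum hpt
      _ = 24 := by simp
  have hB4 : B.card ≤ 4 := by omega
  have hcover : G.edgeFinset ⊆ B.biUnion (fun u => G.incidenceFinset u) := by
    intro e he
    induction e using Sym2.ind with
    | _ u v =>
      have huv : G.Adj u v := by rwa [SimpleGraph.mem_edgeFinset, SimpleGraph.mem_edgeSet] at he
      have hee : s(u, v) ∈ G.edgeSet := huv
      rcases hedge u v huv with h|h
      · exact Finset.mem_biUnion.2 ⟨u, by simp [hB, h],
          (G.mem_incidenceFinset u _).2 ⟨hee, Sym2.mem_mk_left u v⟩⟩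
      · exact Finset.mem_biUnion.2 ⟨v, by simp [hB, h],
          (G.mem_incidenceFinset v _).2 ⟨hee, Sym2.mem_mk_right u v⟩⟩
  have hle8 : G.edgeFinset.card ≤ 8 := by
    calc G.edgeFinset.card ≤ (B.biUnion (fun u => G.incidenceFinset u)).card :=
          Finset.card_le_card hcover
      _ ≤ ∑ u ∈ B, (G.incidenceFinset u).card := Finset.card_biUnion_le
      _ = ∑ u ∈ B, G.degree u := by
          refine Finset.sum_congr rfl fun u _ => ?_
          exact SimpleGraph.card_incidenceFinset_eq_degree G u
      _ ≤ ∑ _u ∈ B, 2 := Finset.sum_le_sum fun u hu => (Finset.mem_filter.1 hu).2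
      _ = 2 * B.card := by rw [Finset.sum_const, smul_eq_mul, mul_comm]
      _ ≤ 8 := by omega
  omega

/-! ### The extremal example -/

def vt (a b c : Bool) : V3 := ![a, b, c]

def s9 : Finset (Sym2 V3) :=
  { s(vt false false false, vt true false false),
    s(vt false false false, vt false true false),
    s(vt false false false, vt false false true),
    s(vt true false false, vt true true false),
    s(vt false true false, vt false true true),
    s(vt false false true, vt true false true),
    s(vt true true false, vt true true true),
    s(vt true false true, vt true true true),
    s(vt false true true, vt true true true) }

def G9 : SimpleGraph V3 := SimpleGraph.fromEdgeSet ↑s9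

instance : DecidableRel G9.Adj := fun a b =>
  decidable_of_iff (s(a, b) ∈ s9 ∧ a ≠ b)
    (by rw [G9, SimpleGraph.fromEdgeSet_adj, Finset.mem_coe])

lemma G9_le : G9 ≤ cube 3 := by
  intro x y h
  revert h
  revert x y
  decide

lemma G9_card : G9.edgeSet.ncard = 9 := by
  have hnd : ∀ e ∈ s9, ¬ e.IsDiag := by decide
  have h1 : G9.edgeSet = ↑s9 := by
    rw [G9, SimpleGraph.edgeSet_fromEdgeSet]
    ext e
    simp only [Set.mem_diff, Set.mem_setOf_eq, Finset.mem_coe]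
    exact ⟨fun h => h.1, fun h => ⟨h, hnd e h⟩⟩
  rw [h1, Set.ncard_coe_finset]
  decide

lemma G9_free : ¬ Contains G9 (doubleStar 2 2) := by
  intro h
  obtain ⟨u, v, h1, h2, h3⟩ := exists_deg_of_contains h
  have : ¬ ∃ u v, G9.Adj u v ∧ 3 ≤ G9.degree u ∧ 3 ≤ G9.degree v := by decide
  exact this ⟨u, v, h1, h2, h3⟩


/-- `ex(Q_3, S_{2,2}) = 9`. -/
theorem stmt2 : exQ 3 (doubleStar 2 2) = 9 := by
  have h9 : 9 ∈ {m | ∃ G : SimpleGraph (Fin 3 → Bool),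
      G ≤ cube 3 ∧ ¬ Contains G (doubleStar 2 2) ∧ G.edgeSet.ncard = m} :=
    ⟨G9, G9_le, G9_free, G9_card⟩
  have hub : ∀ m ∈ {m | ∃ G : SimpleGraph (Fin 3 → Bool),
      G ≤ cube 3 ∧ ¬ Contains G (doubleStar 2 2) ∧ G.edgeSet.ncard = m}, m ≤ 9 := by
    rintro m ⟨G, hle, hnc, rfl⟩
    classical
    have h1 : G.edgeSet.ncard = G.edgeFinset.card := Set.ncard_eq_toFinset_card' _
    rw [h1]
    exact upper hle hnc
  exact le_antisymm (csSup_le ⟨9, h9⟩ hub) (le_csSup ⟨9, hub⟩ h9)
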